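/- arXiv:1603.03191 — 3 statements merged into one kernel-verified Lean document; each statement's English description precedes it below -/
import Mathlib

section
/- Fix a prime p and an integer N > p. For every f ∈ E_{N,p} and every x ∈ (1,p) there exists an integer a with 0 ≤ a ≤ N−p such that f(z) − f(x) ≥ φ_a(z) − φ_a(x) for all z ∈ [1,p]. -/
/-- `f` has right-hand slope `s` at `x`. -/
def HasRightSlope (f : ℝ → ℝ) (x s : ℝ) : Prop :=
  ∃ δ : ℝ, 0 < δ ∧ ∀ y ∈ Set.Ico x (x + δ), f y = f x + s * (y - x)

/-- `f` has left-hand slope `s` at `x`. -/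
def HasLeftSlope (f : ℝ → ℝ) (x s : ℝ) : Prop :=
  ∃ δ : ℝ, 0 < δ ∧ ∀ y ∈ Set.Ioc (x - δ) x, f y = f x + s * (y - x)

/-- The `ℝ_max`-module `E_{N,p}`: continuous convex piecewise affine functions `f : [1,p] → ℝ`
with integral slopes such that `f(1) = f(p)` and `−f'₊(1) + p·f'₋(p) ≤ N`. -/
def ENp (p N : ℕ) (f : ℝ → ℝ) : Prop :=
  ContinuousOn f (Set.Icc 1 p) ∧ ConvexOn ℝ (Set.Icc 1 (p : ℝ)) f ∧
  (∃ (n : ℕ) (t : ℕ → ℝ), 0 < n ∧ t 0 = 1 ∧ t n = p ∧ (∀ i < n, t i < t (i + 1)) ∧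
    ∀ i < n, ∃ (m : ℤ) (c : ℝ), ∀ x ∈ Set.Icc (t i) (t (i + 1)), f x = (m : ℝ) * x + c) ∧
  f 1 = f p ∧
  (∃ s1 sp : ℝ, HasRightSlope f 1 s1 ∧ HasLeftSlope f p sp ∧ -s1 + p * sp ≤ N)

/-- The extremal generators `φ_a(x) = max(−a(x−1), b(x−p))` with `b = ⌊(N−a)/p⌋`,
and `φ_0 = 0`. -/
noncomputable def phiF (p N a : ℕ) (x : ℝ) : ℝ :=
  if a = 0 then 0
  else max (-(a : ℝ) * (x - 1)) ((⌊((N : ℝ) - a) / p⌋ : ℝ) * (x - p))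

lemma find_seg_right (t : ℕ → ℝ) (x : ℝ) :
    ∀ n : ℕ, t 0 ≤ x → x < t n → ∃ i < n, t i ≤ x ∧ x < t (i + 1) := by
  intro n
  induction n with
  | zero => intro h1 h2; exact (lt_irrefl _ (h1.trans_lt h2)).elim
  | succ n ih =>
    intro h1 h2
    by_cases h : t n ≤ x
    · exact ⟨n, Nat.lt_succ_self n, h, h2⟩
    · obtain ⟨i, hi, h3, h4⟩ := ih h1 (not_le.mp h)
      exact ⟨i, hi.trans (Nat.lt_succ_self n), h3, h4⟩

lemma find_seg_left (t : ℕ → ℝ) (x : ℝ) :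
    ∀ n : ℕ, t 0 < x → x ≤ t n → ∃ i < n, t i < x ∧ x ≤ t (i + 1) := by
  intro n
  induction n with
  | zero => intro h1 h2; exact (lt_irrefl _ (h1.trans_le h2)).elim
  | succ n ih =>
    intro h1 h2
    by_cases h : t n < x
    · exact ⟨n, Nat.lt_succ_self n, h, h2⟩
    · obtain ⟨i, hi, h3, h4⟩ := ih h1 (not_lt.mp h)
      exact ⟨i, hi.trans (Nat.lt_succ_self n), h3, h4⟩

lemma t_mono (t : ℕ → ℝ) (n : ℕ) (h : ∀ i < n, t i < t (i + 1)) :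
    ∀ i j, i ≤ j → j ≤ n → t i ≤ t j := by
  intro i j hij hjn
  induction hij with
  | refl => exact le_refl _
  | @step m hm ih =>
    exact le_trans (ih (le_trans (Nat.le_succ m) hjn))
      (le_of_lt (h m (Nat.lt_of_succ_le hjn)))

lemma support_of_affine {p : ℝ} {f : ℝ → ℝ}
    (hconv : ConvexOn ℝ (Set.Icc 1 p) f)
    {u v m x : ℝ} (hu : u ∈ Set.Icc (1 : ℝ) p) (hv : v ∈ Set.Icc (1 : ℝ) p)
    (huv : u < v) (hxu : u ≤ x) (hxv : x ≤ v)
    (haff : ∀ w ∈ Set.Icc u v, f w = f u + m * (w - u)) :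
    ∀ z ∈ Set.Icc (1 : ℝ) p, f x + m * (z - x) ≤ f z := by
  have hfx : f x = f u + m * (x - u) := haff x ⟨hxu, hxv⟩
  have hfv : f v = f u + m * (v - u) := haff v ⟨le_of_lt huv, le_refl v⟩
  intro z hz
  rcases lt_or_ge z u with hzu | hzu
  · have hs := hconv.slope_mono_adjacent hz hv hzu huv
    rw [div_le_div_iff₀ (by linarith) (by linarith)] at hs
    nlinarith
  · rcases le_or_gt z v with hzv | hzv
    · have := haff z ⟨hzu, hzv⟩
      linarith [this]
    · have hs := hconv.slope_mono_adjacent hu hz huv hzv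
      rw [div_le_div_iff₀ (by linarith) (by linarith)] at hs
      nlinarith

lemma max_sub_le {A1 B1 A2 B2 D : ℝ} (h1 : A1 ≤ D + A2) (h2 : B1 ≤ D + A2) :
    max A1 B1 - max A2 B2 ≤ D := by
  have h3 := le_max_left A2 B2
  have h4 := max_le h1 h2
  linarith

lemma max_sub_le' {A1 B1 A2 B2 D : ℝ} (h1 : A1 ≤ D + B2) (h2 : B1 ≤ D + B2) :
    max A1 B1 - max A2 B2 ≤ D := by
  have h3 := le_max_right A2 B2
  have h4 := max_le h1 h2
  linarith

set_option maxHeartbeats 2000000 in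
/-- For every `f ∈ E_{N,p}` and every `x ∈ (1,p)` there is an integer
`0 ≤ a ≤ N−p` with `f(z) − f(x) ≥ φ_a(z) − φ_a(x)` for all `z ∈ [1,p]`. -/
theorem statement14 (p N : ℕ) (hp : p.Prime) (hN : p < N)
    (f : ℝ → ℝ) (hf : ENp p N f) (x : ℝ) (hx : x ∈ Set.Ioo (1 : ℝ) p) :
    ∃ a : ℕ, a ≤ N - p ∧ ∀ z ∈ Set.Icc (1 : ℝ) p,
      f z - f x ≥ phiF p N a z - phiF p N a x := by
  obtain ⟨hcont, hconv, ⟨n, t, hn, ht0, htn, htlt, haff⟩, hper, s1, sp, hs1, hsp, hbound⟩ := hf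
  obtain ⟨hx1, hxp⟩ := hx
  have hp1 : (1 : ℝ) < p := hx1.trans hxp
  have hpR : (0 : ℝ) < p := by linarith
  have hmem : ∀ i ≤ n, t i ∈ Set.Icc (1 : ℝ) p := by
    intro i hi
    constructor
    · rw [← ht0]; exact t_mono t n htlt 0 i (Nat.zero_le i) hi
    · rw [← htn]; exact t_mono t n htlt i n hi (le_refl n)
  have haff' : ∀ i < n, ∃ m : ℤ, ∀ w ∈ Set.Icc (t i) (t (i + 1)),
      f w = f (t i) + (m : ℝ) * (w - t i) := by
    intro i hi
    obtain ⟨m, c, hmc⟩ := haff i hi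
    refine ⟨m, fun w hw => ?_⟩
    have h1 := hmc w hw
    have h2 := hmc (t i) ⟨le_refl _, le_of_lt (htlt i hi)⟩
    rw [h1, h2]; ring
  -- right integer subgradient at x
  obtain ⟨i, hi, hxi, hxi'⟩ := find_seg_right t x n
    (by rw [ht0]; exact le_of_lt hx1) (by rw [htn]; exact hxp)
  obtain ⟨mR, hmR⟩ := haff' i hi
  have SR : ∀ z ∈ Set.Icc (1 : ℝ) p, f x + (mR : ℝ) * (z - x) ≤ f z :=
    support_of_affine hconv (hmem i (le_of_lt hi)) (hmem (i + 1) hi) (htlt i hi)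
      hxi (le_of_lt hxi') hmR
  -- left integer subgradient at x
  obtain ⟨j, hj, hxj, hxj'⟩ := find_seg_left t x n
    (by rw [ht0]; exact hx1) (by rw [htn]; exact le_of_lt hxp)
  obtain ⟨mL, hmL⟩ := haff' j hj
  have SL : ∀ z ∈ Set.Icc (1 : ℝ) p, f x + (mL : ℝ) * (z - x) ≤ f z :=
    support_of_affine hconv (hmem j (le_of_lt hj)) (hmem (j + 1) hj) (htlt j hj)
      (le_of_lt hxj) hxj' hmL
  -- slope at 1 : s1 = m0
  obtain ⟨m0, hm0⟩ := haff' 0 hn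
  have ht11 : 1 < t (0 + 1) := by rw [← ht0]; exact htlt 0 hn
  have S1sup : ∀ z ∈ Set.Icc (1 : ℝ) p, f 1 + (m0 : ℝ) * (z - 1) ≤ f z := by
    intro z hz
    have := support_of_affine hconv (hmem 0 (Nat.zero_le n)) (hmem (0 + 1) hn) (htlt 0 hn)
      (le_refl (t 0)) (le_of_lt (htlt 0 hn)) hm0 z hz
    rw [ht0] at this
    exact this
  obtain ⟨δ1, hδ1, hδf⟩ := hs1
  have hs1m0 : s1 = (m0 : ℝ) := by
    set ε := min (δ1 / 2) ((t (0 + 1) - 1) / 2) with hεdef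
    have hε : 0 < ε := lt_min (by linarith) (by linarith)
    have hεa : ε ≤ δ1 / 2 := min_le_left _ _
    have hεb : ε ≤ (t (0 + 1) - 1) / 2 := min_le_right _ _
    have hy1 : f (1 + ε) = f 1 + s1 * ((1 + ε) - 1) :=
      hδf (1 + ε) ⟨by linarith, by linarith⟩
    have hy2 : f (1 + ε) = f (t 0) + (m0 : ℝ) * ((1 + ε) - t 0) :=
      hm0 (1 + ε) ⟨by rw [ht0]; linarith, by linarith⟩
    rw [ht0] at hy2
    have hkey : s1 * ε = (m0 : ℝ) * ε := by
      have h := hy1.symm.trans hy2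
      ring_nf at h ⊢
      linarith
    exact mul_right_cancel₀ (ne_of_gt hε) hkey
  -- slope at p : sp = mp'
  have hk : n - 1 < n := Nat.sub_lt hn one_pos
  have hk1 : (n - 1) + 1 = n := Nat.succ_pred_eq_of_pos hn
  obtain ⟨mp', hmp⟩ := haff' (n - 1) hk
  have htkp : t (n - 1) < p := by
    have := htlt (n - 1) hk
    rw [hk1, htn] at this
    exact this
  have htk1p : t ((n - 1) + 1) = p := by rw [hk1, htn]
  have SPsup : ∀ z ∈ Set.Icc (1 : ℝ) p, f p + (mp' : ℝ) * (z - p) ≤ f z := by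
    intro z hz
    have := support_of_affine hconv (hmem (n - 1) (le_of_lt hk)) (hmem ((n - 1) + 1) hk)
      (htlt (n - 1) hk) (le_of_lt (htlt (n - 1) hk)) (le_refl _) hmp z hz
    rw [htk1p] at this
    have hfp : f (t ((n - 1) + 1)) = f (t (n - 1)) + (mp' : ℝ) * (t ((n - 1) + 1) - t (n - 1)) :=
      hmp _ ⟨le_of_lt (htlt (n - 1) hk), le_refl _⟩
    rw [htk1p] at hfp
    linarith
  obtain ⟨δp, hδp, hδfp⟩ := hsp
  have hspmp : sp = (mp' : ℝ) := by
    set ε := min (δp / 2) ((p - t (n - 1)) / 2) with hεdef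
    have hε : 0 < ε := lt_min (by linarith) (by linarith)
    have hεa : ε ≤ δp / 2 := min_le_left _ _
    have hεb : ε ≤ (p - t (n - 1)) / 2 := min_le_right _ _
    have hy1 : f (p - ε) = f p + sp * ((p - ε) - p) :=
      hδfp (p - ε) ⟨by linarith, by linarith⟩
    have hy2 : f (p - ε) = f (t (n - 1)) + (mp' : ℝ) * ((p - ε) - t (n - 1)) :=
      hmp (p - ε) ⟨by linarith, by rw [htk1p]; linarith⟩
    have hyp : f p = f (t (n - 1)) + (mp' : ℝ) * (p - t (n - 1)) := by
      have := hmp p ⟨le_of_lt htkp, by rw [htk1p]⟩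
      exact this
    have hkey : sp * ε = (mp' : ℝ) * ε := by
      have h := hy1.symm.trans hy2
      ring_nf at h ⊢
      linarith
    exact mul_right_cancel₀ (ne_of_gt hε) hkey
  rw [hs1m0, hspmp] at hbound
  have hboundZ : -m0 + (p : ℤ) * mp' ≤ (N : ℤ) := by exact_mod_cast hbound
  have hxI : x ∈ Set.Icc (1 : ℝ) p := ⟨le_of_lt hx1, le_of_lt hxp⟩
  have h1I : (1 : ℝ) ∈ Set.Icc (1 : ℝ) p := ⟨le_refl _, le_of_lt hp1⟩
  have hpI : (p : ℝ) ∈ Set.Icc (1 : ℝ) p := ⟨le_of_lt hp1, le_refl _⟩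
  rcases lt_or_ge mR 0 with hneg | hRnn
  -- CASE: negative subgradient mR < 0, take a = -mR
  · have hmRR : (mR : ℝ) ≤ -1 := by exact_mod_cast (by omega : mR ≤ -1)
    have haZ : (((-mR).toNat : ℤ)) = -mR := Int.toNat_of_nonneg (by omega)
    have haR : (((-mR).toNat : ℕ) : ℝ) = -(mR : ℝ) := by exact_mod_cast haZ
    have hx1f : f x ≤ f 1 + (mR : ℝ) * (x - 1) := by
      have := SR 1 h1I; nlinarith
    have hfx1 : f x < f 1 := by nlinarith
    have hSPx := SPsup x hxI
    have hmp0 : (0 : ℝ) < (mp' : ℝ) := by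
      by_contra h
      push_neg at h
      nlinarith
    have hmp1 : (1 : ℤ) ≤ mp' := by
      have : (0 : ℤ) < mp' := by exact_mod_cast hmp0
      omega
    have hs1R : (m0 : ℝ) ≤ (mR : ℝ) := by
      have := S1sup x hxI
      nlinarith
    have hs1Z : m0 ≤ mR := by exact_mod_cast hs1R
    have hpmp : (p : ℤ) ≤ (p : ℤ) * mp' := le_mul_of_one_le_right (by positivity) hmp1
    have hkeyZ : -mR ≤ (N : ℤ) - p := by linarith
    refine ⟨(-mR).toNat, by omega, ?_⟩
    have hane : (-mR).toNat ≠ 0 := by omega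
    have hb1 : mp' ≤ ⌊((N : ℝ) - -(mR : ℝ)) / (p : ℝ)⌋ := by
      rw [Int.le_floor, le_div_iff₀ hpR]
      have hz : (p : ℤ) * mp' ≤ (N : ℤ) - -mR := by linarith
      have hzR : ((p : ℤ) * mp' : ℝ) ≤ (((N : ℤ) - -mR : ℤ) : ℝ) := by exact_mod_cast hz
      push_cast at hzR
      linarith
    have hbB : (mp' : ℝ) ≤ (⌊((N : ℝ) - -(mR : ℝ)) / (p : ℝ)⌋ : ℝ) := by exact_mod_cast hb1
    intro z hz
    simp only [phiF, if_neg hane, ge_iff_le]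
    apply max_sub_le
    · rw [haR]
      linarith [SR z hz]
    · rw [haR]
      have hzz : ((⌊((N : ℝ) - -(mR : ℝ)) / (p : ℝ)⌋ : ℝ) - (mp' : ℝ)) * (z - p) ≤ 0 :=
        mul_nonpos_of_nonneg_of_nonpos (by linarith) (by linarith [hz.2])
      have := SPsup z hz
      nlinarith [SPsup z hz]
  · rcases lt_or_ge 0 mL with hpos | hLnp
    -- CASE: positive subgradient mL > 0, take a = N - p * mL
    · have hmL1 : (1 : ℝ) ≤ (mL : ℝ) := by exact_mod_cast (by omega : (1 : ℤ) ≤ mL)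
      have hxpf : f x ≤ f p + (mL : ℝ) * (x - p) := by
        have := SL p hpI; nlinarith
      have hfxp : f x < f p := by nlinarith
      have hs10 : (m0 : ℝ) < 0 := by
        have := S1sup x hxI
        nlinarith
      have hs1Z : m0 ≤ -1 := by
        have : m0 < 0 := by exact_mod_cast hs10
        omega
      have hmLsp : (mL : ℝ) ≤ (mp' : ℝ) := by
        have := SPsup x hxI
        nlinarith
      have hmLspZ : mL ≤ mp' := by exact_mod_cast hmLsp
      have hpmL : (p : ℤ) * mL ≤ (p : ℤ) * mp' :=
        mul_le_mul_of_nonneg_left hmLspZ (by positivity)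
      have hpmL1 : (p : ℤ) ≤ (p : ℤ) * mL :=
        le_mul_of_one_le_right (by positivity) (by omega)
      have hanon : 0 ≤ (N : ℤ) - (p : ℤ) * mL := by linarith
      have haZ : ((((N : ℤ) - (p : ℤ) * mL).toNat : ℤ)) = (N : ℤ) - (p : ℤ) * mL :=
        Int.toNat_of_nonneg hanon
      have haR : ((((N : ℤ) - (p : ℤ) * mL).toNat : ℕ) : ℝ) = (N : ℝ) - (p : ℝ) * (mL : ℝ) := by
        exact_mod_cast haZ
      have hkeyZ : (N : ℤ) - (p : ℤ) * mL ≤ (N : ℤ) - p := by linarith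
      refine ⟨((N : ℤ) - (p : ℤ) * mL).toNat, by omega, ?_⟩
      have hane : ((N : ℤ) - (p : ℤ) * mL).toNat ≠ 0 := by omega
      have ham0 : -((((N : ℤ) - (p : ℤ) * mL).toNat : ℕ) : ℝ) ≤ (m0 : ℝ) := by
        rw [haR]
        have : (p : ℤ) * mL - m0 ≤ (N : ℤ) := by linarith
        have hzR : (((p : ℤ) * mL - m0 : ℤ) : ℝ) ≤ (((N : ℤ)) : ℝ) := by exact_mod_cast this
        push_cast at hzR
        linarith
      have hBeq : ⌊((N : ℝ) - ((((N : ℤ) - (p : ℤ) * mL).toNat : ℕ) : ℝ)) / (p : ℝ)⌋ = mL := by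
        have hdiv : ((N : ℝ) - ((((N : ℤ) - (p : ℤ) * mL).toNat : ℕ) : ℝ)) / (p : ℝ)
            = (mL : ℝ) := by
          rw [haR]
          field_simp
          ring
        rw [hdiv, Int.floor_intCast]
      intro z hz
      simp only [phiF, if_neg hane, ge_iff_le]
      rw [hBeq]
      apply max_sub_le'
      · -- left branch vs B2 = mL*(x-p)
        have hprod : (0 : ℝ) ≤ ((m0 : ℝ) + ((((N : ℤ) - (p : ℤ) * mL).toNat : ℕ) : ℝ)) * (z - 1) :=
          mul_nonneg (by linarith [ham0]) (by linarith [hz.1])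
        have := S1sup z hz
        nlinarith
      · have := SL z hz
        linarith [SL z hz]
    -- CASE: zero subgradient, take a = 0
    · refine ⟨0, Nat.zero_le _, fun z hz => ?_⟩
      norm_num [phiF]
      rcases le_total x z with h | h
      · have h1 := SR z hz
        have : 0 ≤ (mR : ℝ) * (z - x) :=
          mul_nonneg (by exact_mod_cast hRnn) (by linarith)
        linarith
      · have h2 := SL z hz
        have hLnpR : (mL : ℝ) ≤ 0 := by exact_mod_cast hLnp
        nlinarith
end

section
/- Let K be a semifield. If there exist u ∈ K and an integer n ≥ 1 with u^n = 1 and u ≠ 1, then 1 has an additive inverse in K, i.e. there exists b ∈ K with 1 + b = 0 (so that K is in fact a field). -/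
/-- If a semifield contains a nontrivial root of unity, then `1` has an
additive inverse (so the semifield is in fact a field). -/
theorem semifield_field_of_root_of_unity (K : Type*) [Semifield K]
    (u : K) (n : ℕ) (hn : 1 ≤ n) (hu : u ^ n = 1) (hune : u ≠ 1) :
    ∃ b : K, 1 + b = 0 := by
  obtain ⟨m, rfl⟩ := Nat.exists_eq_add_of_le hn
  set s : K := ∑ i ∈ Finset.range (1 + m), u ^ i with hs
  have hrw : 1 + m = m + 1 := by ring
  have hus : u * s = s := by
    rw [hs, Finset.mul_sum]
    simp_rw [← pow_succ']
    rw [hrw] at hu ⊢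
    rw [Finset.sum_range_succ, Finset.sum_range_succ', hu, pow_zero]
  rcases eq_or_ne s 0 with h0 | h0
  · refine ⟨∑ i ∈ Finset.range m, u ^ (i + 1), ?_⟩
    have : s = 1 + ∑ i ∈ Finset.range m, u ^ (i + 1) := by
      rw [hs, hrw, Finset.sum_range_succ', pow_zero]; ring
    rw [← this, h0]
  · exact absurd (mul_right_cancel₀ h0 (by rw [hus, one_mul])) hune
end

section
/- Let K be a semifield whose multiplicative group of nonzero elements (equivalently, its group of units) is an infinite cyclic group. Then K is isomorphic as a semiring to the tropical semifield ℤ_max, i.e. the set ℤ ∪ {−∞} with addition given by (x, y) ↦ max(x, y) and multiplication given by (x, y) ↦ x + y (with −∞ absorbing for the multiplication and neutral for the addition). -/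
structure TropAux (K : Type*) [Semifield K] where
  z : ℤ → K
  hadd : ∀ n m : ℤ, z (n + m) = z n * z m
  hzero : z 0 = 1
  hinj : Function.Injective z
  hsurj : ∀ x : K, x ≠ 0 → ∃ n, z n = x

namespace TropAux

variable {K : Type*} [Semifield K] (A : TropAux K)

lemma mul_neg_self (n : ℤ) : A.z n * A.z (-n) = 1 := by
  rw [← A.hadd]; simp [A.hzero]

lemma ne_zero (n : ℤ) : A.z n ≠ 0 := by
  intro h
  have h2 := A.mul_neg_self n
  rw [h, zero_mul] at h2
  exact zero_ne_one h2

/-- cancel a unit factor -/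
lemma unit_cancel {x y : K} (n : ℤ) (h : x * A.z n = y * A.z n) : x = y :=
  mul_right_cancel₀ (A.ne_zero n) h

def neg : TropAux K where
  z := fun n => A.z (-n)
  hadd := fun n m => by show A.z (-(n+m)) = _; rw [neg_add, A.hadd]
  hzero := by simp [A.hzero]
  hinj := fun n m h => by have := A.hinj h; omega
  hsurj := fun x hx => by obtain ⟨n, hn⟩ := A.hsurj x hx; exact ⟨-n, by simpa using hn⟩

lemma exists_aux (K : Type*) [Semifield K] (h : Nonempty (Kˣ ≃* Multiplicative ℤ)) :
    Nonempty (TropAux K) := by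
  obtain ⟨φ⟩ := h
  refine ⟨⟨fun n => (φ.symm (Multiplicative.ofAdd n) : K), ?_, ?_, ?_, ?_⟩⟩
  · intro n m
    rw [← Units.val_mul, ← map_mul]
    rfl
  · simpa using congrArg (Units.val) (map_one φ.symm)
  · intro n m hnm
    have h1 : φ.symm (Multiplicative.ofAdd n) = φ.symm (Multiplicative.ofAdd m) :=
      Units.ext hnm
    have h2 := φ.symm.injective h1
    exact Multiplicative.ofAdd.injective h2
  · intro x hx
    obtain ⟨u, hu⟩ := IsUnit.exists_right_inv (IsUnit.of_mul_eq_one (a := x) x⁻¹ (mul_inv_cancel₀ hx))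
    -- simpler: x is a unit
    obtain ⟨v, hv⟩ := (isUnit_iff_ne_zero.mpr hx)
    exact ⟨Multiplicative.toAdd (φ v), by simp [hv]⟩

include A in
lemma no_neg : ∀ w : K, 1 + w ≠ 0 := by
  classical
  intro w hz
  -- additive cancellation
  have hcan : ∀ p q r : K, p + q = p + r → q = r := by
    intro p q r h
    have hp0 : p + p * w = 0 := by
      have h1 : p * (1 + w) = 0 := by rw [hz, mul_zero]
      calc p + p * w = p * (1 + w) := by ring
        _ = 0 := h1
    calc q = q + (p + p * w) := by rw [hp0, add_zero]
      _ = (p + q) + p * w := by ring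
      _ = (p + r) + p * w := by rw [h]
      _ = r + (p + p * w) := by ring
      _ = r := by rw [hp0, add_zero]
  have hz0 : w ≠ 0 := by
    rintro rfl
    rw [add_zero] at hz
    exact one_ne_zero hz
  have hzz : w * w = 1 := by
    have h1 : w + w * w = 0 := by
      have h2 : w * (1 + w) = 0 := by rw [hz, mul_zero]
      calc w + w * w = w * (1 + w) := by ring
        _ = 0 := h2
    have h3 : w + w * w = w + 1 := by rw [h1, add_comm w 1, hz]
    exact hcan w _ _ h3
  have hz1 : w = 1 := by
    obtain ⟨m, hm⟩ := A.hsurj w hz0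
    have h4 : A.z (m + m) = A.z 0 := by rw [A.hadd, hm, hzz, A.hzero]
    have hm0 : m = 0 := by have := A.hinj h4; omega
    rw [← hm, hm0, A.hzero]
  rw [hz1] at hz
  -- now characteristic 2
  have h11 : (1 : K) + 1 = 0 := hz
  have char2 : ∀ x : K, x + x = 0 := by
    intro x
    calc x + x = x * (1 + 1) := by ring
      _ = 0 := by rw [h11, mul_zero]
  set g := A.z 1 with hgdef
  have natpow : ∀ k : ℕ, A.z (k : ℤ) = g ^ k := by
    intro k; induction k with
    | zero => simpa using A.hzero
    | succ k ih =>
        have hc : ((k + 1 : ℕ) : ℤ) = (k : ℤ) + 1 := by push_cast; ring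
        rw [hc, A.hadd, ih, pow_succ]
  -- 1 + g = z n for some n ∉ {0, 1}
  have hgne : (1 : K) + g ≠ 0 := by
    intro h
    have hg1 : g = 1 := hcan 1 g 1 (by rw [h, ← h11])
    have : A.z 1 = A.z 0 := by rw [A.hzero, ← hgdef, hg1]
    have := A.hinj this
    omega
  obtain ⟨n, hn⟩ := A.hsurj _ hgne
  have hn0 : n ≠ 0 := by
    rintro rfl
    rw [A.hzero] at hn
    have : (1 : K) + g = 1 + 0 := by rw [add_zero, ← hn]
    exact A.ne_zero 1 (by rw [← hgdef]; exact hcan 1 g 0 this)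
  have hn1 : n ≠ 1 := by
    rintro rfl
    have h8 : g + 1 = g + 0 := by
      rw [add_zero, add_comm g 1, ← hn, hgdef]
    exact one_ne_zero (hcan g 1 0 h8)
  -- a polynomial relation : g ^ d = sum of smaller powers
  obtain ⟨d, C0, hd2, hC0, hrel⟩ :
      ∃ (d : ℕ) (C : Finset ℕ), 2 ≤ d ∧ C ⊆ Finset.range d ∧ g ^ d = ∑ i ∈ C, g ^ i := by
    rcases le_or_gt 2 n with h2n | hn2
    · refine ⟨n.toNat, {0, 1}, by omega, ?_, ?_⟩
      · intro x hx
        simp only [Finset.mem_insert, Finset.mem_singleton] at hx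
        rcases hx with rfl | rfl <;> simp <;> omega
      · have : ((n.toNat : ℕ) : ℤ) = n := by omega
        rw [← natpow n.toNat] at *
        rw [this, hn]
        rw [Finset.sum_pair (by omega : (0:ℕ) ≠ 1)]
        simp
    · have hnneg : n ≤ -1 := by
        rcases lt_trichotomy n 0 with h | h | h
        · omega
        · exact absurd h hn0
        · omega
      set a := (-n).toNat with ha
      have ha1 : 1 ≤ a := by omega
      have hzn : A.z (-n) + A.z (1 - n) = 1 := by
        have := congrArg (fun x => x * A.z (-n)) hn
        rw [A.mul_neg_self n] at this
        calc A.z (-n) + A.z (1 - n) = (1 + g) * A.z (-n) := by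
              rw [add_mul, one_mul, hgdef, ← A.hadd]
              ring_nf
          _ = A.z n * A.z (-n) := by rw [hn]
          _ = 1 := A.mul_neg_self n
      have hy : A.z (1 - n) = 1 + A.z (-n) := by
        have h5 : A.z (1 - n) + (A.z (-n) + A.z (-n)) = 1 + A.z (-n) := by
          rw [← add_assoc, add_comm (A.z (1-n)) (A.z (-n)), hzn]
        rw [char2, add_zero] at h5
        exact h5
      refine ⟨a + 1, {0, a}, by omega, ?_, ?_⟩
      · intro x hx
        simp only [Finset.mem_insert, Finset.mem_singleton] at hx
        rcases hx with rfl | rfl <;> simp <;> omega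
      · have e1 : ((a + 1 : ℕ) : ℤ) = 1 - n := by omega
        have e2 : ((a : ℕ) : ℤ) = -n := by omega
        rw [← natpow (a+1), e1, hy, Finset.sum_pair (by omega : (0:ℕ) ≠ a)]
        rw [← natpow a, e2]
        simp
  -- finite set of subset sums
  have haddc : ∀ B C : Finset ℕ, Disjoint B C →
      (∑ i ∈ B, g ^ i) + (∑ i ∈ C, g ^ i) = ∑ i ∈ B ∪ C, g ^ i := by
    intro B C hBC
    rw [Finset.sum_union hBC]
  have hsumadd : ∀ B C : Finset ℕ,
      (∑ i ∈ B, g ^ i) + (∑ i ∈ C, g ^ i) = ∑ i ∈ (B \ C) ∪ (C \ B), g ^ i := by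
    intro B C
    have hB : ∑ i ∈ B, g ^ i = ∑ i ∈ B \ C, g ^ i + ∑ i ∈ B ∩ C, g ^ i := by
      rw [← Finset.sum_union (Finset.disjoint_sdiff_inter B C), Finset.sdiff_union_inter]
    have hC : ∑ i ∈ C, g ^ i = ∑ i ∈ C \ B, g ^ i + ∑ i ∈ C ∩ B, g ^ i := by
      rw [← Finset.sum_union (Finset.disjoint_sdiff_inter C B), Finset.sdiff_union_inter]
    rw [hB, hC, Finset.inter_comm C B]
    rw [Finset.sum_union (disjoint_sdiff_sdiff)]
    have hcc := char2 (∑ i ∈ B ∩ C, g ^ i)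
    calc (∑ i ∈ B \ C, g ^ i + ∑ i ∈ B ∩ C, g ^ i) +
          (∑ i ∈ C \ B, g ^ i + ∑ i ∈ B ∩ C, g ^ i)
        = (∑ i ∈ B \ C, g ^ i + ∑ i ∈ C \ B, g ^ i) +
          (∑ i ∈ B ∩ C, g ^ i + ∑ i ∈ B ∩ C, g ^ i) := by ring
      _ = ∑ i ∈ B \ C, g ^ i + ∑ i ∈ C \ B, g ^ i := by rw [hcc, add_zero]
  have powmem : ∀ k : ℕ, ∃ B ⊆ Finset.range d, g ^ k = ∑ i ∈ B, g ^ i := by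
    intro k; induction k with
    | zero =>
        refine ⟨{0}, ?_, by simp⟩
        intro x hx
        simp only [Finset.mem_singleton] at hx
        simp [hx]; omega
    | succ k ih =>
        obtain ⟨B, hB, hBk⟩ := ih
        have hmap : g ^ (k + 1) = ∑ i ∈ B.image (· + 1), g ^ i := by
          rw [Finset.sum_image (by intro x _ y _ h; simp only at h; omega)]
          rw [pow_succ, hBk, Finset.sum_mul]
          exact Finset.sum_congr rfl (fun i _ => (pow_succ g i).symm)
        set C := B.image (· + 1) with hCdef
        have hCsub : C ⊆ Finset.range (d + 1) := by
          intro x hx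
          simp only [hCdef, Finset.mem_image] at hx
          obtain ⟨i, hi, rfl⟩ := hx
          have := hB hi
          simp only [Finset.mem_range] at this ⊢
          omega
        by_cases hdC : d ∈ C
        · have hCd : C.erase d ⊆ Finset.range d := by
            intro x hx
            have h6 := Finset.mem_of_mem_erase hx
            have h7 := Finset.ne_of_mem_erase hx
            have := hCsub h6
            simp only [Finset.mem_range] at this ⊢
            omega
          have hsplit : g ^ (k+1) = (∑ i ∈ C.erase d, g ^ i) + g ^ d := by
            rw [hmap, ← Finset.sum_erase_add C _ hdC]
          rw [hrel] at hsplit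
          rw [hsumadd (C.erase d) C0] at hsplit
          refine ⟨(C.erase d \ C0) ∪ (C0 \ C.erase d), ?_, hsplit⟩
          intro x hx
          rcases Finset.mem_union.mp hx with h | h
          · exact hCd (Finset.mem_sdiff.mp h).1
          · exact hC0 (Finset.mem_sdiff.mp h).1
        · refine ⟨C, ?_, hmap⟩
          intro x hx
          have := hCsub hx
          simp only [Finset.mem_range] at this ⊢
          rcases eq_or_ne x d with rfl | hxd
          · exact absurd hx hdC
          · omega
  -- contradiction by pigeonhole
  have hginj : Function.Injective (fun k : ℕ => g ^ k) := by
    intro i j hij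
    simp only at hij
    have : A.z (i : ℤ) = A.z (j : ℤ) := by rw [natpow, natpow, hij]
    exact_mod_cast A.hinj this
  have hfin : (Set.range fun k : ℕ => g ^ k).Finite := by
    apply Set.Finite.subset
      (Finset.finite_toSet (((Finset.range d).powerset).image (fun B => ∑ i ∈ B, g ^ i)))
    rintro x ⟨k, rfl⟩
    obtain ⟨B, hB, hBk⟩ := powmem k
    simp only [Finset.coe_image, Set.mem_image, Finset.mem_coe, Finset.mem_powerset]
    exact ⟨B, hB, hBk.symm⟩
  exact Set.infinite_range_of_injective hginj hfin
end TropAux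

section Keys
variable {K : Type*} [Semifield K]

lemma key_SS {u v : K} (hu : 1 + u = 1) (hv : 1 + v = 1) : 1 + u * v = 1 := by
  calc 1 + u * v = (1 + u) + u * v := by rw [hu]
    _ = 1 + u * (1 + v) := by ring
    _ = 1 + u * 1 := by rw [hv]
    _ = 1 + u := by rw [mul_one]
    _ = 1 := hu

lemma key_TT {u v : K} (hu : 1 + u = u) (hv : 1 + v = v) : 1 + u * v = u * v := by
  have h1 : v + u * v = u * v := by
    calc v + u * v = (1 + u) * v := by ring
      _ = u * v := by rw [hu]
  calc 1 + u * v = 1 + (v + u * v) := by rw [h1]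
    _ = (1 + v) + u * v := by ring
    _ = v + u * v := by rw [hv]
    _ = u * v := h1

lemma key_Sd {u : K} (hu : 1 + u = 1) : 1 + u * (1 + 1) = 1 := by
  have huu : 1 + u * u = 1 := key_SS hu hu
  calc 1 + u * (1 + 1) = (1 + u * u) + u * (1 + 1) := by rw [huu]
    _ = (1 + u) * (1 + u) := by ring
    _ = 1 * 1 := by rw [hu]
    _ = 1 := one_mul 1

lemma key_Td {u : K} (hu : 1 + u = u) : 1 + u * (1 + 1) = u * (1 + 1) := by
  calc 1 + u * (1 + 1) = (1 + u) + u := by ring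
    _ = u + u := by rw [hu]
    _ = u * (1 + 1) := by ring

lemma key_Tdd {u : K} (hu : 1 + u = u) : u * u = u * u + u * (1 + 1) := by
  have huu : 1 + u * u = u * u := key_TT hu hu
  calc u * u = (1 + u) * (1 + u) := by rw [hu]
    _ = (1 + u * u) + u * (1 + 1) := by ring
    _ = u * u + u * (1 + 1) := by rw [huu]

end Keys

namespace TropAux2

open TropAux

variable {K : Type*} [Semifield K] (A : TropAux K)

/-- exponents killed by 1 -/
def S (s : ℤ) : Prop := 1 + A.z s = 1
/-- exponents absorbing 1 -/
def T (t : ℤ) : Prop := 1 + A.z t = A.z t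

lemma S_add {s t : ℤ} (hs : S A s) (ht : S A t) : S A (s + t) := by
  show 1 + A.z (s + t) = 1
  rw [A.hadd]
  exact key_SS hs ht

lemma T_add {s t : ℤ} (hs : T A s) (ht : T A t) : T A (s + t) := by
  show 1 + A.z (s + t) = A.z (s + t)
  rw [A.hadd]
  exact key_TT hs ht

lemma S_neg_T {s : ℤ} (hs : S A s) : T A (-s) := by
  show 1 + A.z (-s) = A.z (-s)
  calc 1 + A.z (-s) = A.z (-s) * (1 + A.z s) := by
        rw [mul_add, mul_one, ← A.hadd]
        simp [A.hzero, add_comm]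
    _ = A.z (-s) * 1 := by rw [hs]
    _ = A.z (-s) := mul_one _

lemma T_neg_S {t : ℤ} (ht : T A t) : S A (-t) := by
  show 1 + A.z (-t) = 1
  have h1 : A.z (-t) * (1 + A.z t) = A.z (-t) * A.z t := by rw [ht]
  rw [mul_add, mul_one, ← A.hadd] at h1
  simp only [neg_add_cancel, A.hzero] at h1
  rw [add_comm] at h1
  exact h1

lemma S_nsmul {s : ℤ} (hs : S A s) : ∀ c : ℕ, 1 ≤ c → S A ((c : ℤ) * s) := by
  intro c hc
  induction c with
  | zero => omega
  | succ c ih =>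
      rcases Nat.eq_or_lt_of_le hc with h | h
      · have : ((1 : ℕ) : ℤ) * s = s := by push_cast; ring
        rw [← h, this]
        exact hs
      · have hc1 : 1 ≤ c := by omega
        have := S_add A (ih hc1) hs
        have hcast : ((c : ℤ)) * s + s = ((c + 1 : ℕ) : ℤ) * s := by push_cast; ring
        rwa [hcast] at this

lemma T_nsmul {t : ℤ} (ht : T A t) : ∀ c : ℕ, 1 ≤ c → T A ((c : ℤ) * t) := by
  intro c hc
  induction c with
  | zero => omega
  | succ c ih =>
      rcases Nat.eq_or_lt_of_le hc with h | h
      · have : ((1 : ℕ) : ℤ) * t = t := by push_cast; ring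
        rw [← h, this]
        exact ht
      · have hc1 : 1 ≤ c := by omega
        have := T_add A (ih hc1) ht
        have hcast : ((c : ℤ)) * t + t = ((c + 1 : ℕ) : ℤ) * t := by push_cast; ring
        rwa [hcast] at this

section WithA
variable {a : ℤ} (ha : A.z a = 1 + 1)

include ha in
lemma S_add_a {s : ℤ} (hs : S A s) : S A (s + a) := by
  show 1 + A.z (s + a) = 1
  rw [A.hadd, ha]
  exact key_Sd hs

include ha in
lemma T_add_a {t : ℤ} (ht : T A t) : T A (t + a) := by
  show 1 + A.z (t + a) = A.z (t + a)
  rw [A.hadd, ha]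
  exact key_Td ht

include ha in
lemma S_add_nsmul_a {s : ℤ} (hs : S A s) : ∀ c : ℕ, S A (s + (c : ℤ) * a) := by
  intro c
  induction c with
  | zero => simpa using hs
  | succ c ih =>
      have := S_add_a A ha ih
      have hcast : s + (c : ℤ) * a + a = s + ((c + 1 : ℕ) : ℤ) * a := by push_cast; ring
      rwa [hcast] at this

include ha in
lemma T_add_nsmul_a {t : ℤ} (ht : T A t) : ∀ c : ℕ, T A (t + (c : ℤ) * a) := by
  intro c
  induction c with
  | zero => simpa using ht
  | succ c ih =>
      have := T_add_a A ha ih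
      have hcast : t + (c : ℤ) * a + a = t + ((c + 1 : ℕ) : ℤ) * a := by push_cast; ring
      rwa [hcast] at this

end WithA

lemma ST_eq_zero {x : ℤ} (hxS : S A x) (hxT : T A x) : x = 0 := by
  have h1 : A.z x = 1 := by rw [← hxT, hxS]
  have : A.z x = A.z 0 := by rw [h1, A.hzero]
  exact A.hinj this

end TropAux2

lemma bin_aux : ∀ (x k : ℕ), x ^ (k+1) + (k+1) * x ^ k ≤ (x+1)^(k+1) := by
  intro x k
  induction k with
  | zero => simp
  | succ k ih =>
      have h1 : x ^ (k+2) + (k+2) * x ^ (k+1) ≤ (x+1) * (x ^ (k+1) + (k+1) * x ^ k) := by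
        have e : (x+1) * (x ^ (k+1) + (k+1) * x ^ k)
            = (x ^ (k+2) + (k+2) * x ^ (k+1)) + (k+1) * x ^ k := by ring
        rw [e]
        exact Nat.le_add_right _ _
      calc x ^ (k+2) + (k+2) * x ^ (k+1)
          ≤ (x+1) * (x ^ (k+1) + (k+1) * x ^ k) := h1
        _ ≤ (x+1) * (x+1)^(k+1) := Nat.mul_le_mul_left _ ih
        _ = (x+1)^(k+2) := by ring

lemma two_bound (x : ℕ) (hx : 1 ≤ x) : 2 * x ^ x ≤ (x+1) ^ x := by
  obtain ⟨k, rfl⟩ : ∃ k, x = k + 1 := ⟨x - 1, by omega⟩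
  have h := bin_aux (k+1) k
  have e : (k+1) ^ (k+1) + (k+1) * (k+1) ^ k = 2 * (k+1)^(k+1) := by ring
  rw [e] at h
  exact h

lemma three_bound (x : ℕ) (hx : 1 ≤ x) : 3 * x ^ (2*x) ≤ (x+1) ^ (2*x) := by
  obtain ⟨j, hj⟩ : ∃ j, 2 * x = j + 1 := ⟨2*x - 1, by omega⟩
  have h := bin_aux x j
  have e : x ^ (j+1) + (j+1) * x ^ j = 3 * x ^ (j + 1) := by
    have e2 : (j + 1) = 2 * x := hj.symm
    calc x ^ (j+1) + (j+1) * x ^ j = x ^ (j+1) + 2 * (x * x ^ j) := by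
          rw [e2]; ring
      _ = 3 * x ^ (j+1) := by rw [← pow_succ']; ring
  rw [e] at h
  rw [hj]
  exact h

namespace TropAux

variable {K : Type*} [Semifield K] (A : TropAux K)

include A in
lemma zsf {x y : K} (h : x + y = 0) : x = 0 := by
  by_contra hx
  apply A.no_neg (x⁻¹ * y)
  have h2 : x⁻¹ * (x + y) = 0 := by rw [h, mul_zero]
  rw [mul_add, inv_mul_cancel₀ hx] at h2
  exact h2

include A in
lemma cast_ne (n : ℕ) (hn : 1 ≤ n) : ((n : K)) ≠ 0 := by
  intro h0
  obtain ⟨k, rfl⟩ : ∃ k, n = k + 1 := ⟨n - 1, by omega⟩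
  have e : ((k+1 : ℕ) : K) = 1 + (k : K) := by push_cast; ring
  exact A.no_neg (k : K) (by rw [← e, h0])

open TropAux2 in
lemma main_pos (a : ℤ) (ha : A.z a = 1 + 1) (hapos : 0 < a) : False := by
  classical
  have ha1 : 1 ≤ a := hapos
  by_cases hm : ∃ m : ℤ, m ≠ 0 ∧ S A m
  · -- case (i) : some nonzero exponent is killed by 1
    obtain ⟨m, hm0, hmS⟩ := hm
    set c : ℕ := (|m| + 1).toNat with hc
    have hcc : ((c : ℤ)) = |m| + 1 := by
      rw [hc, Int.toNat_of_nonneg (by positivity)]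
    have hq1 : 1 ≤ m + (c : ℤ) * a := by
      rw [hcc]
      nlinarith [le_abs_self m, neg_abs_le m, abs_nonneg m]
    have hp1 : 1 ≤ -m + (c : ℤ) * a := by
      rw [hcc]
      nlinarith [le_abs_self m, neg_abs_le m, abs_nonneg m]
    set q : ℤ := m + (c : ℤ) * a with hqdef
    set p : ℤ := -m + (c : ℤ) * a with hpdef
    have hqS : S A q := S_add_nsmul_a A ha hmS c
    have hpT : T A p := T_add_nsmul_a A ha (S_neg_T A hmS) c
    have h1 : S A (((p.toNat : ℤ)) * q) := S_nsmul A hqS p.toNat (by omega)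
    have h2 : T A (((q.toNat : ℤ)) * p) := T_nsmul A hpT q.toNat (by omega)
    rw [Int.toNat_of_nonneg (by omega)] at h1 h2
    rw [mul_comm q p] at h2
    have := ST_eq_zero A h1 h2
    have hpq : 0 < p * q := mul_pos (by omega) (by omega)
    omega
  · -- case (ii) : ordered case
    push_neg at hm
    -- Q : exponents of elements of the form 1 + x
    have hQpos : ∀ k : ℤ, (∃ x : K, 1 + x = A.z k) → 0 ≤ k := by
      intro k hk
      by_contra hkneg
      push_neg at hkneg
      -- build elements with exponents (-k)*a and -((-k)*a) in Q
      have hQadd : ∀ k1 k2 : ℤ, (∃ x : K, 1 + x = A.z k1) → (∃ x : K, 1 + x = A.z k2) →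
          (∃ x : K, 1 + x = A.z (k1 + k2)) := by
        rintro k1 k2 ⟨x, hx⟩ ⟨y, hy⟩
        refine ⟨x + y + x * y, ?_⟩
        rw [A.hadd, ← hx, ← hy]; ring
      have hQnsmul : ∀ k0 : ℤ, (∃ x : K, 1 + x = A.z k0) → ∀ d : ℕ, 1 ≤ d →
          (∃ x : K, 1 + x = A.z ((d : ℤ) * k0)) := by
        intro k0 hk0 d hd
        induction d with
        | zero => omega
        | succ d ih =>
            rcases Nat.eq_or_lt_of_le hd with h | h
            · rw [← h]; simpa using hk0
            · have := hQadd _ _ (ih (by omega)) hk0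
              have hcast : ((d:ℤ)) * k0 + k0 = ((d+1 : ℕ) : ℤ) * k0 := by push_cast; ring
              rwa [hcast] at this
      have hQa : ∃ x : K, 1 + x = A.z a := ⟨1, ha.symm⟩
      have hw1 : ∃ x : K, 1 + x = A.z (((-k).toNat : ℤ) * a) :=
        hQnsmul a hQa (-k).toNat (by omega)
      have hw2 : ∃ x : K, 1 + x = A.z ((a.toNat : ℤ) * k) :=
        hQnsmul k hk a.toNat (by omega)
      rw [Int.toNat_of_nonneg (by omega)] at hw1
      rw [Int.toNat_of_nonneg (by omega)] at hw2
      set w : ℤ := (-k) * a with hwdef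
      have hw2' : ∃ x : K, 1 + x = A.z (-w) := by
        have e : a * k = -w := by rw [hwdef]; ring
        rwa [e] at hw2
      obtain ⟨x, hx⟩ := hw1
      obtain ⟨y, hy⟩ := hw2'
      have hu : 1 + (x + y + x * y) = 1 := by
        have e : (1 + x) * (1 + y) = 1 + (x + y + x * y) := by ring
        rw [← e, hx, hy, ← A.hadd]
        simp [A.hzero]
      have hx0 : x ≠ 0 := by
        intro h0
        rw [h0, add_zero] at hx
        have : w = 0 := by
          apply A.hinj
          rw [← hx, A.hzero]
        have hw0 : 0 < w := by
          rw [hwdef]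
          exact mul_pos (by omega) hapos
        omega
      have hu0 : x + y + x * y ≠ 0 := by
        intro h0
        rw [add_assoc] at h0
        exact hx0 (A.zsf h0)
      obtain ⟨m, hm'⟩ := A.hsurj _ hu0
      have hmne : m ≠ 0 := by
        rintro rfl
        rw [A.hzero] at hm'
        rw [← hm'] at hu
        have : a = 0 := by
          apply A.hinj
          rw [ha, A.hzero, hu]
        omega
      exact hm m hmne (by rw [← hm'] at hu; exact hu)
    -- the additive-to-multiplicative function f
    obtain ⟨f, fspec⟩ : ∃ f : ℕ → ℤ, ∀ n : ℕ, ((n:K)) ≠ 0 → A.z (f n) = (n : K) :=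
      ⟨fun n => if h : ((n : K)) = 0 then 0 else (A.hsurj _ h).choose,
        fun n hn => by
          show A.z (if h : ((n : K)) = 0 then (0:ℤ) else (A.hsurj _ h).choose) = ((n : K))
          rw [dif_neg hn]
          exact (A.hsurj _ hn).choose_spec⟩
    have fspec' : ∀ n : ℕ, 1 ≤ n → A.z (f n) = (n : K) := fun n hn =>
      fspec n (A.cast_ne n hn)
    have fmul : ∀ n m : ℕ, 1 ≤ n → 1 ≤ m → f (n * m) = f n + f m := by
      intro n m hn hm'
      apply A.hinj
      rw [A.hadd, fspec' n hn, fspec' m hm', fspec' (n*m) (Nat.one_le_iff_ne_zero.mpr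
        (by positivity)), Nat.cast_mul]
    have f1 : f 1 = 0 := by
      apply A.hinj
      rw [fspec' 1 le_rfl, A.hzero, Nat.cast_one]
    have f2 : f 2 = a := by
      apply A.hinj
      rw [fspec' 2 (by omega), ha]
      norm_num
    have fmono_succ : ∀ n : ℕ, 1 ≤ n → f n ≤ f (n + 1) := by
      intro n hn
      have hkey : 1 + A.z (-(f n)) = A.z (f (n+1) - f n) := by
        have e1 : A.z (f (n+1)) * A.z (-(f n)) = A.z (f (n+1) - f n) := by
          rw [← A.hadd]; ring_nf
        have e2 : ((n+1 : ℕ) : K) = (n : K) + 1 := by push_cast; ring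
        rw [← e1, fspec' (n+1) (by omega), e2, add_mul, ← fspec' n hn, A.mul_neg_self,
          add_comm]
        ring
      have := hQpos (f (n+1) - f n) ⟨A.z (-(f n)), hkey⟩
      omega
    have fmono : ∀ n m : ℕ, 1 ≤ n → n ≤ m → f n ≤ f m := by
      intro n m hn hnm
      induction m with
      | zero => omega
      | succ m ih =>
          rcases Nat.eq_or_lt_of_le hnm with h | h
          · rw [h]
          · have h1 : 1 ≤ m := by omega
            exact le_trans (ih (by omega)) (fmono_succ m h1)
    have fpow : ∀ n : ℕ, 1 ≤ n → ∀ k : ℕ, f (n ^ k) = (k : ℤ) * f n := by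
      intro n hn k
      induction k with
      | zero => simpa using f1
      | succ k ih =>
          rw [pow_succ, fmul (n^k) n (Nat.one_le_iff_ne_zero.mpr (by positivity)) hn, ih]
          push_cast; ring
    set b : ℤ := f 3 with hbdef
    have hab : a ≤ b := by
      rw [← f2, hbdef]
      exact fmono 2 3 (by omega) (by omega)
    have hb1 : 1 ≤ b := le_trans ha1 hab
    have key : ∀ (u v ku kv : ℕ), 1 ≤ u → 1 ≤ v → u ^ ku ≤ v ^ kv →
        (ku : ℤ) * f u ≤ (kv : ℤ) * f v := by
      intro u v ku kv hu hv hle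
      rw [← fpow u hu ku, ← fpow v hv kv]
      exact fmono _ _ (Nat.one_le_iff_ne_zero.mpr (by positivity)) hle
    set α : ℕ := a.toNat with hα
    set β : ℕ := b.toNat with hβ
    have hαa : ((α : ℤ)) = a := Int.toNat_of_nonneg (by omega)
    have hβb : ((β : ℤ)) = b := Int.toNat_of_nonneg (by omega)
    have hα1 : 1 ≤ α := by omega
    have hβ1 : 1 ≤ β := by omega
    rcases lt_trichotomy (2 ^ β) (3 ^ α) with hlt | heq | hgt
    · set x : ℕ := 2 ^ β with hx
      have hx1 : 1 ≤ x := Nat.one_le_two_pow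
      have hchain : 2 ^ (β * x + 1) ≤ 3 ^ (α * x) := by
        calc 2 ^ (β * x + 1) = 2 * (2 ^ β) ^ x := by
              rw [← pow_mul]; ring
          _ ≤ (x + 1) ^ x := two_bound x hx1
          _ ≤ (3 ^ α) ^ x := Nat.pow_le_pow_left (by omega) x
          _ = 3 ^ (α * x) := by rw [← pow_mul]
      have h2 : ((β * x + 1 : ℕ) : ℤ) * f 2 ≤ ((α * x : ℕ) : ℤ) * f 3 :=
        key 2 3 (β * x + 1) (α * x) (by omega) (by omega) hchain
      rw [f2, ← hbdef] at h2
      push_cast at h2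
      rw [hαa, hβb] at h2
      have e1 : (b * (x:ℤ) + 1) * a = b * (x:ℤ) * a + a := by ring
      have e2 : a * (x:ℤ) * b = b * (x:ℤ) * a := by ring
      rw [e1, e2] at h2
      linarith
    · have h2 : (2 : ℕ) ∣ 3 ^ α := by
        rw [← heq]
        exact dvd_pow_self 2 (by omega)
      have h3 := Nat.Prime.dvd_of_dvd_pow Nat.prime_two h2
      norm_num at h3
    · set x : ℕ := 3 ^ α with hx
      have hx1 : 1 ≤ x := Nat.one_le_pow _ _ (by omega)
      have hchain : 3 ^ (α * (2 * x) + 1) ≤ 2 ^ (β * (2 * x)) := by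
        calc 3 ^ (α * (2 * x) + 1) = 3 * (3 ^ α) ^ (2 * x) := by
              rw [← pow_mul]; ring
          _ ≤ (x + 1) ^ (2 * x) := three_bound x hx1
          _ ≤ (2 ^ β) ^ (2 * x) := Nat.pow_le_pow_left (by omega) _
          _ = 2 ^ (β * (2 * x)) := by rw [← pow_mul]
      have h2 : ((α * (2 * x) + 1 : ℕ) : ℤ) * f 3 ≤ ((β * (2 * x) : ℕ) : ℤ) * f 2 :=
        key 3 2 _ _ (by omega) (by omega) hchain
      rw [f2, ← hbdef] at h2
      push_cast at h2
      rw [hαa, hβb] at h2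
      have e1 : (a * (2 * (x:ℤ)) + 1) * b = a * (2 * (x:ℤ)) * b + b := by ring
      have e2 : b * (2 * (x:ℤ)) * a = a * (2 * (x:ℤ)) * b := by ring
      rw [e1, e2] at h2
      linarith

include A in
lemma idem : (1 : K) + 1 = 1 := by
  have h112 : (1 : K) + 1 ≠ 0 := A.no_neg 1
  obtain ⟨a, ha⟩ := A.hsurj _ h112
  rcases lt_trichotomy a 0 with h | h | h
  · exact absurd (A.neg.main_pos (-a) (by show A.z (-(-a)) = 1 + 1; rw [neg_neg, ha])
      (by omega)) (by simp)
  · rw [h, A.hzero] at ha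
    exact ha.symm
  · exact absurd (A.main_pos a ha h) (by simp)

end TropAux

namespace TropAux2

open TropAux

variable {K : Type*} [Semifield K] (A : TropAux K)

lemma T_zero (hid : (1:K) + 1 = 1) : T A 0 := by
  show 1 + A.z 0 = A.z 0
  rw [A.hzero]
  exact hid

lemma exists_F (hid : (1:K) + 1 = 1) (n : ℤ) :
    ∃ j : ℤ, A.z j = 1 + A.z n ∧ T A j ∧ T A (j - n) := by
  have hne : (1:K) + A.z n ≠ 0 := by
    have h0 := A.zsf (x := A.z 0) (y := A.z n)
    intro h
    rw [A.hzero] at h0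
    exact one_ne_zero (h0 h)
  obtain ⟨j, hj⟩ := A.hsurj _ hne
  refine ⟨j, hj, ?_, ?_⟩
  · show 1 + A.z j = A.z j
    rw [hj, ← add_assoc, hid]
  · show 1 + A.z (j - n) = A.z (j - n)
    have e : A.z (j - n) = 1 + A.z (-n) := by
      have e1 : A.z (j - n) = A.z j * A.z (-n) := by
        rw [← A.hadd]
        congr 1
        try ring
      rw [e1, hj, add_mul, one_mul, ← A.hadd]
      have e2 : n + -n = 0 := by ring
      rw [e2, A.hzero]
      ring
    rw [e, ← add_assoc, hid]

lemma Fmin {n j u : ℤ} (hj : A.z j = 1 + A.z n) (hu : T A u) (hun : T A (u - n)) :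
    T A (u - j) := by
  have hun' : 1 + A.z (u - n) = A.z (u - n) := hun
  have hu' : 1 + A.z u = A.z u := hu
  have step1 : A.z n + A.z u = A.z u := by
    calc A.z n + A.z u = A.z n * (1 + A.z (u - n)) := by
          rw [mul_add, mul_one, ← A.hadd]
          have e : n + (u - n) = u := by ring
          rw [e]
      _ = A.z n * A.z (u - n) := by rw [hun']
      _ = A.z u := by
          rw [← A.hadd]
          congr 1
          try ring
  have step2 : A.z j + A.z u = A.z u := by
    calc A.z j + A.z u = 1 + (A.z n + A.z u) := by rw [hj]; ring
      _ = 1 + A.z u := by rw [step1]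
      _ = A.z u := hu'
  have e3 := congrArg (fun x => x * A.z (-j)) step2
  rw [add_mul, A.mul_neg_self, ← A.hadd] at e3
  have e4 : u + -j = u - j := by ring
  rw [e4] at e3
  exact e3

lemma T_sign (hid : (1:K) + 1 = 1) :
    (∀ t, T A t → 0 ≤ t) ∨ (∀ t, T A t → t ≤ 0) := by
  by_contra h
  push_neg at h
  obtain ⟨⟨t, ht, htneg⟩, ⟨u, hu, hupos⟩⟩ := h
  have hx : T A ((-t) * u) := by
    have := T_nsmul A hu (-t).toNat (by omega)
    rwa [Int.toNat_of_nonneg (by omega)] at this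
  have hmx : T A (u * t) := by
    have := T_nsmul A ht u.toNat (by omega)
    rwa [Int.toNat_of_nonneg (by omega)] at this
  have hmx' : T A (-((-t) * u)) := by
    have e : -((-t) * u) = u * t := by ring
    rwa [e]
  have hS : S A ((-t) * u) := by
    have := T_neg_S A hmx'
    rwa [neg_neg] at this
  have h0 := ST_eq_zero A hS hx
  have : 0 < (-t) * u := mul_pos (by omega) hupos
  omega

lemma exists_mono {K : Type*} [Semifield K] (A : TropAux K) :
    ∃ B : TropAux K, ∀ n m : ℤ, n ≤ m → B.z n + B.z m = B.z m := by
  classical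
  have hid : (1:K) + 1 = 1 := A.idem
  obtain ⟨B, hBnn⟩ : ∃ B : TropAux K, ∀ t : ℤ, T B t → 0 ≤ t := by
    rcases T_sign A hid with h | h
    · exact ⟨A, h⟩
    · refine ⟨A.neg, ?_⟩
      intro t ht
      have h2 : T A (-t) := ht
      have := h _ h2
      omega
  suffices hT : ∀ n : ℤ, 0 ≤ n → T B n by
    refine ⟨B, ?_⟩
    intro n m hnm
    have ht : 1 + B.z (m - n) = B.z (m - n) := hT (m - n) (by omega)
    have e1 := congrArg (fun x => B.z n * x) ht
    rw [mul_add, mul_one, ← B.hadd] at e1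
    have e2 : n + (m - n) = m := by ring
    rw [e2] at e1
    exact e1
  have h1T : T B 1 := by
    by_contra h1T
    obtain ⟨j, hj, hjT, hj1T⟩ := exists_F B hid 1
    have hj0 : 0 ≤ j := hBnn _ hjT
    have hj10 : 0 ≤ j - 1 := hBnn _ hj1T
    have hjne : j ≠ 1 := by
      intro h
      rw [h] at hj
      exact h1T hj.symm
    have hj2 : 2 ≤ j := by omega
    set e : ℤ := j - 1 with hedef
    have heT : T B e := hj1T
    have hejT : T B (e + 1) := by
      have h' : e + 1 = j := by omega
      rw [h']
      exact hjT
    have he1 : e ≠ 1 := fun h => h1T (h ▸ heT)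
    have he2 : 2 ≤ e := by omega
    have combo : ∀ c1 c2 : ℕ, 1 ≤ c1 + c2 → T B ((c1:ℤ) * e + (c2:ℤ) * (e+1)) := by
      intro c1 c2 h12
      rcases Nat.eq_zero_or_pos c1 with h1 | h1
      · simpa [h1] using T_nsmul B hejT c2 (by omega)
      rcases Nat.eq_zero_or_pos c2 with h2 | h2
      · simpa [h2] using T_nsmul B heT c1 (by omega)
      · exact T_add B (T_nsmul B heT c1 h1) (T_nsmul B hejT c2 h2)
    have cofinite : ∀ n : ℤ, e^2 ≤ n → T B n := by
      intro n hn
      have he0 : 0 < e := by omega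
      have h1 : e * (n / e) + n % e = n := Int.mul_ediv_add_emod n e
      have hr0 : 0 ≤ n % e := Int.emod_nonneg n (by omega)
      have hre : n % e < e := Int.emod_lt_of_pos n he0
      have hqe : e ≤ n / e := by
        rw [Int.le_ediv_iff_mul_le he0]
        nlinarith
      set q := n / e with hqdef
      set r := n % e with hrdef
      have heq2 : n = (q - r) * e + r * (e + 1) := by
        rw [← h1]
        ring
      have hcombo := combo (q - r).toNat r.toNat (by omega)
      rw [Int.toNat_of_nonneg (by omega), Int.toNat_of_nonneg hr0] at hcombo
      rwa [← heq2] at hcombo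
    have hN4 : (4:ℤ) ≤ e^2 := by nlinarith
    set gaps : Finset ℕ := (Finset.range (e^2).toNat).filter (fun n => ¬ T B (n:ℤ))
      with hgaps
    have h1mem : 1 ∈ gaps := by
      rw [hgaps, Finset.mem_filter, Finset.mem_range]
      constructor
      · omega
      · simp only [Nat.cast_one]
        exact h1T
    set c : ℕ := gaps.max' ⟨1, h1mem⟩ with hcdef
    have hcmem : c ∈ gaps := Finset.max'_mem _ _
    have hcT : ¬ T B (c:ℤ) := by
      have := (Finset.mem_filter.mp (hgaps ▸ hcmem)).2
      exact this
    have hc1 : 1 ≤ c := Finset.le_max' _ 1 h1mem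
    have habove : ∀ n : ℤ, (c:ℤ) < n → T B n := by
      intro n hn
      rcases le_or_gt (e^2) n with h | h
      · exact cofinite n h
      · have hn0 : 0 ≤ n := by omega
        by_contra hnT
        have hmem : n.toNat ∈ gaps := by
          rw [hgaps, Finset.mem_filter, Finset.mem_range]
          constructor
          · omega
          · rwa [Int.toNat_of_nonneg hn0]
        have := Finset.le_max' gaps n.toNat hmem
        omega
    obtain ⟨J, hJ, hJT, hJcT⟩ := exists_F B hid (c:ℤ)
    have hJc : J ≠ (c:ℤ) := by
      intro h
      rw [h] at hJ
      exact hcT hJ.symm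
    have hJge : (c:ℤ) < J := by
      have := hBnn _ hJcT
      omega
    have huT : T B (J + (c:ℤ)) := habove _ (by omega)
    have hucT : T B (J + (c:ℤ) - (c:ℤ)) := by
      have e0 : J + (c:ℤ) - (c:ℤ) = J := by ring
      rw [e0]
      exact hJT
    have hfin := Fmin B hJ huT hucT
    have e0 : J + (c:ℤ) - J = (c:ℤ) := by ring
    rw [e0] at hfin
    exact hcT hfin
  intro n hn
  have hnat : ∀ k : ℕ, T B (k : ℤ) := by
    intro k
    induction k with
    | zero => exact T_zero B hid
    | succ k ih =>
        have h' := T_add B ih h1T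
        have e0 : (k:ℤ) + 1 = ((k+1:ℕ):ℤ) := by push_cast; ring
        rwa [e0] at h'
  have h' := hnat n.toNat
  rwa [Int.toNat_of_nonneg hn] at h'

end TropAux2

/-- A semifield whose group of units is infinite cyclic is isomorphic as a
semiring to the tropical semifield `ℤ_max`, i.e. `ℤ ∪ {−∞}` (realized as `WithBot ℤ`) with
"addition" given by `max` and "multiplication" given by `+` (with `−∞ = ⊥` absorbing for the
multiplication and neutral for the addition). -/
theorem semifield_units_infinite_cyclic_iso_Zmax (K : Type*) [Semifield K]
    (h : Nonempty (Kˣ ≃* Multiplicative ℤ)) :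
    ∃ e : K ≃ WithBot ℤ,
      e 0 = ⊥ ∧ e 1 = ((0 : ℤ) : WithBot ℤ) ∧
      (∀ x y : K, e (x + y) = max (e x) (e y)) ∧
      (∀ x y : K, e (x * y) = e x + e y) := by
  classical
  obtain ⟨A0⟩ := TropAux.exists_aux K h
  obtain ⟨B, hB⟩ := TropAux2.exists_mono A0
  have hmax : ∀ n m : ℤ, B.z n + B.z m = B.z (max n m) := by
    intro n m
    rcases le_total n m with h' | h'
    · rw [max_eq_right h']
      exact hB n m h'
    · rw [max_eq_left h', add_comm]
      exact hB m n h'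
  obtain ⟨f, hf0, hfz⟩ : ∃ f : K → WithBot ℤ, f 0 = ⊥ ∧ ∀ n : ℤ,
      f (B.z n) = (n : WithBot ℤ) := by
    refine ⟨fun x => if hx : x = 0 then ⊥ else (((B.hsurj x hx).choose : ℤ) : WithBot ℤ),
      by simp, ?_⟩
    intro n
    have hne := B.ne_zero n
    simp only [dif_neg hne]
    exact WithBot.coe_inj.mpr (B.hinj ((B.hsurj _ hne).choose_spec))
  have hleft : Function.LeftInverse (WithBot.recBotCoe (0:K) B.z) f := by
    intro x
    by_cases hx : x = 0
    · rw [hx, hf0]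
      rfl
    · obtain ⟨n, hn⟩ := B.hsurj x hx
      rw [← hn, hfz]
      rfl
  have hright : Function.RightInverse (WithBot.recBotCoe (0:K) B.z) f := by
    intro w
    induction w using WithBot.recBotCoe with
    | bot => exact hf0
    | coe n => exact hfz n
  refine ⟨⟨f, WithBot.recBotCoe (0:K) B.z, hleft, hright⟩, hf0, ?_, ?_, ?_⟩
  · show f 1 = ((0 : ℤ) : WithBot ℤ)
    rw [← B.hzero, hfz]
  · intro x y
    show f (x + y) = max (f x) (f y)
    by_cases hx : x = 0
    · rw [hx, zero_add, hf0, max_eq_right bot_le]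
    by_cases hy : y = 0
    · rw [hy, add_zero, hf0, max_eq_left bot_le]
    obtain ⟨n, hn⟩ := B.hsurj x hx
    obtain ⟨m, hm⟩ := B.hsurj y hy
    rw [← hn, ← hm, hmax n m, hfz, hfz, hfz]
    rcases le_total n m with h' | h'
    · rw [max_eq_right h', max_eq_right (WithBot.coe_le_coe.mpr h')]
    · rw [max_eq_left h', max_eq_left (WithBot.coe_le_coe.mpr h')]
  · intro x y
    show f (x * y) = f x + f y
    by_cases hx : x = 0
    · rw [hx, zero_mul, hf0, WithBot.bot_add]
    by_cases hy : y = 0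
    · rw [hy, mul_zero, hf0, WithBot.add_bot]
    obtain ⟨n, hn⟩ := B.hsurj x hx
    obtain ⟨m, hm⟩ := B.hsurj y hy
    rw [← hn, ← hm, ← B.hadd, hfz, hfz, hfz, WithBot.coe_add]
end
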